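/- Let X be a type, f, g : X → ℝ and f̂, ĝ : X → X → ℝ. Assume: (i) f̂ x y ≤ f x for all x, y (the surrogate objective minorizes the objective); (ii) f̂ x x = f x for all x; (iii) g x ≤ ĝ x y for all x, y (the surrogate constraint majorizes the constraint); (iv) ĝ x x = g x for all x. Let x : ℕ → X be a sequence such that ĝ (x 0) (x 0) ≤ 0 and, for every n, x (n+1) maximizes the surrogate subproblem at x n, i.e. ĝ (x (n+1)) (x n) ≤ 0 and for all y with ĝ y (x n) ≤ 0 one has f̂ y (x n) ≤ f̂ (x (n+1)) (x n). Then: (a) every iterate is feasible for the original constraint, g (x n) ≤ 0 for all n, and each iterate is feasible for its own next surrogate subproblem, ĝ (x n) (x n) ≤ 0; (b) the objective values are monotonically nondecreasing, f (x n) ≤ f (x (n+1)) for all n; (c) if f is bounded above on the set {y : g y ≤ 0}, then the sequence (f (x n)) converges. -/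
import Mathlib


/-- Abstract convergence content of Lemma 1 for the SCA procedure (Algorithm 1):
with a surrogate objective `fh` minorizing `f` (tight at the anchor) and a
surrogate constraint `gh` majorizing `g` (tight at the anchor), any SCA iterate
sequence is feasible for the original problem and for its own next subproblem,
the objective values are monotonically nondecreasing, and if `f` is bounded
above on the feasible set then the objective values converge. -/
theorem sca_convergence {X : Type*} (f g : X → ℝ) (fh gh : X → X → ℝ)
    (hmin : ∀ x y, fh x y ≤ f x) (htightf : ∀ x, fh x x = f x)
    (hmaj : ∀ x y, g x ≤ gh x y) (htightg : ∀ x, gh x x = g x)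
    (x : ℕ → X) (h0 : gh (x 0) (x 0) ≤ 0)
    (hfeas : ∀ n, gh (x (n + 1)) (x n) ≤ 0)
    (hopt : ∀ n, ∀ y, gh y (x n) ≤ 0 → fh y (x n) ≤ fh (x (n + 1)) (x n)) :
    (∀ n, g (x n) ≤ 0 ∧ gh (x n) (x n) ≤ 0) ∧
    (∀ n, f (x n) ≤ f (x (n + 1))) ∧
    ((∃ C : ℝ, ∀ y, g y ≤ 0 → f y ≤ C) →
      ∃ l : ℝ, Filter.Tendsto (fun n => f (x n)) Filter.atTop (nhds l)) := by

  have hg : ∀ n, g (x n) ≤ 0 := by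
    intro n
    cases n with
    | zero => rw [← htightg]; exact h0
    | succ m => exact le_trans (hmaj _ _) (hfeas m)
  have hgh : ∀ n, gh (x n) (x n) ≤ 0 := fun n => by rw [htightg]; exact hg n
  have hmono : ∀ n, f (x n) ≤ f (x (n + 1)) := by
    intro n
    calc f (x n) = fh (x n) (x n) := (htightf _).symm
      _ ≤ fh (x (n + 1)) (x n) := hopt n _ (hgh n)
      _ ≤ f (x (n + 1)) := hmin _ _
  refine ⟨fun n => ⟨hg n, hgh n⟩, hmono, fun ⟨C, hC⟩ => ?_⟩
  have hm : Monotone fun n => f (x n) := monotone_nat_of_le_succ hmono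
  have hb : BddAbove (Set.range fun n => f (x n)) :=
    ⟨C, by rintro _ ⟨n, rfl⟩; exact hC _ (hg n)⟩
  exact ⟨_, tendsto_atTop_ciSup hm hb⟩
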